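/- arXiv:2212.08648 — 2 statements merged into one kernel-verified Lean document; each statement's English description precedes it below -/
import Mathlib

section
/- Let l, k ≥ 0 and n ≥ 1. For each set partition π of Fin(l+k) into at most n blocks, define the matrix X_π : (Fin l → Fin n) × (Fin k → Fin n) → ℂ by X_π(I, J) = 1 if the kernel partition of the concatenated tuple (I, J) : Fin(l+k) → Fin n equals π, and 0 otherwise. Then {X_π : π a set partition of Fin(l+k) with at most n blocks} is a basis of the complex vector space of matrices f : (Fin l → Fin n) × (Fin k → Fin n) → ℂ satisfying f(σ ∘ I, σ ∘ J) = f(I, J) for all σ ∈ S_n; in particular this space, which is Hom_{S_n}(M_n^{⊗k}, M_n^{⊗l}) in the standard basis, has dimension Bell(l+k, n). -/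
noncomputable section
open scoped Classical

/-- `Bell m n`: the number of set partitions of `Fin m` (encoded as setoids,
i.e. equivalence relations) into at most `n` blocks. -/
def Bell (m n : ℕ) : ℕ :=
  Nat.card {π : Setoid (Fin m) // Nat.card (Quotient π) ≤ n}

/-- The space `Hom_{S_n}(M_n^{⊗k}, M_n^{⊗l})` in the standard basis: matrices
`f : (Fin l → Fin n) × (Fin k → Fin n) → ℂ` with `f (σ ∘ I, σ ∘ J) = f (I, J)`
for all `σ ∈ S_n`. -/
def MHom (n l k : ℕ) : Submodule ℂ ((Fin l → Fin n) × (Fin k → Fin n) → ℂ) where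
  carrier := {f | ∀ (σ : Equiv.Perm (Fin n)) (I : Fin l → Fin n) (J : Fin k → Fin n),
    f (⇑σ ∘ I, ⇑σ ∘ J) = f (I, J)}
  add_mem' := by
    intro a b ha hb σ I J
    simp only [Pi.add_apply, ha σ I J, hb σ I J]
  zero_mem' := by intro σ I J; rfl
  smul_mem' := by
    intro c a ha σ I J
    simp only [Pi.smul_apply, ha σ I J]

variable {m n : ℕ}

lemma ker_comp_perm (σ : Equiv.Perm (Fin n)) (f : Fin m → Fin n) :
    Setoid.ker (⇑σ ∘ f) = Setoid.ker f := by
  ext a b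
  simp [Setoid.ker_def, σ.injective.eq_iff]

lemma card_quot_ker_le (f : Fin m → Fin n) :
    Nat.card (Quotient (Setoid.ker f)) ≤ n := by
  have h := Nat.card_le_card_of_injective _ (Setoid.kerLift_injective f)
  simpa using h

lemma exists_perm_of_ker_eq (f g : Fin m → Fin n) (h : Setoid.ker f = Setoid.ker g) :
    ∃ σ : Equiv.Perm (Fin n), ⇑σ ∘ f = g := by
  let Q := Quotient (Setoid.ker f)
  let fb : Q → Fin n := Quotient.lift f fun _ _ h => h
  have hfb : Function.Injective fb := Setoid.kerLift_injective f
  let gb : Q → Fin n := Quotient.lift g fun a b hab => by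
    have : Setoid.ker g a b := h ▸ hab
    exact this
  have hgb : Function.Injective gb := by
    intro a b
    induction a using Quotient.ind
    induction b using Quotient.ind
    intro hab
    apply Quotient.sound
    show Setoid.ker f _ _
    rw [h]
    exact hab
  let e : {x // x ∈ Set.range fb} ≃ {x // x ∈ Set.range gb} :=
    (Equiv.ofInjective fb hfb).symm.trans (Equiv.ofInjective gb hgb)
  refine ⟨e.extendSubtype, funext fun a => ?_⟩
  have hm : f a ∈ Set.range fb := ⟨⟦a⟧, rfl⟩
  have := e.extendSubtype_apply_of_mem (f a) hm
  simp only [Function.comp_apply, this]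
  show ((Equiv.ofInjective gb hgb) ((Equiv.ofInjective fb hfb).symm ⟨f a, hm⟩) : Fin n) = g a
  have : (⟨f a, hm⟩ : {x // x ∈ Set.range fb}) = ⟨fb ⟦a⟧, ⟨⟦a⟧, rfl⟩⟩ := rfl
  rw [this, Equiv.ofInjective_symm_apply]
  rfl

lemma exists_tuple_of_card_le (π : Setoid (Fin m)) (hπ : Nat.card (Quotient π) ≤ n) :
    ∃ f : Fin m → Fin n, Setoid.ker f = π := by
  haveI : Fintype (Quotient π) := Fintype.ofFinite _
  have hcard : Fintype.card (Quotient π) ≤ Fintype.card (Fin n) := by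
    simpa [Nat.card_eq_fintype_card] using hπ
  obtain ⟨e⟩ := Function.Embedding.nonempty_of_card_le hcard
  refine ⟨fun a => e ⟦a⟧, ?_⟩
  ext a b
  simp [Setoid.ker_def, e.injective.eq_iff, Quotient.eq]

instance : Finite (Setoid (Fin m)) := by
  apply Finite.of_injective (fun s : Setoid (Fin m) => s.r)
  intro s t h
  cases s; cases t
  simp only at h
  subst h
  rfl


/-- the matrices `X_π`, for `π` a set partition of `Fin (l + k)` with at
most `n` blocks, where `X_π (I, J) = 1` if the kernel partition of the concatenated
tuple `(I, J) : Fin (l + k) → Fin n` equals `π` and `0` otherwise, form a basis of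
`Hom_{S_n}(M_n^{⊗k}, M_n^{⊗l})`; in particular that space has dimension
`Bell (l + k) n`. -/
theorem MHom_basis (l k n : ℕ) (hn : 1 ≤ n) :
    (∃ b : Module.Basis {π : Setoid (Fin (l + k)) // Nat.card (Quotient π) ≤ n} ℂ ↥(MHom n l k),
      ∀ (π : {π : Setoid (Fin (l + k)) // Nat.card (Quotient π) ≤ n})
        (I : Fin l → Fin n) (J : Fin k → Fin n),
        (b π : (Fin l → Fin n) × (Fin k → Fin n) → ℂ) (I, J) =
          if Setoid.ker (Fin.append I J) = (π : Setoid (Fin (l + k))) then 1 else 0) ∧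
    Module.finrank ℂ ↥(MHom n l k) = Bell (l + k) n := by
  classical
  set T := {π : Setoid (Fin (l + k)) // Nat.card (Quotient π) ≤ n} with hT
  haveI : Fintype T := Fintype.ofFinite _
  let X : T → ((Fin l → Fin n) × (Fin k → Fin n) → ℂ) := fun π p =>
    if Setoid.ker (Fin.append p.1 p.2) = (π : Setoid (Fin (l + k))) then 1 else 0
  have happ : ∀ (σ : Equiv.Perm (Fin n)) (I : Fin l → Fin n) (J : Fin k → Fin n),
      Fin.append (⇑σ ∘ I) (⇑σ ∘ J) = ⇑σ ∘ Fin.append I J := by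
    intro σ I J
    funext x
    induction x using Fin.addCases <;> simp [Fin.append_left, Fin.append_right]
  have hXmem : ∀ π : T, X π ∈ MHom n l k := by
    intro π σ I J
    simp only [X, happ σ I J, ker_comp_perm]
  let v : T → MHom n l k := fun π => ⟨X π, hXmem π⟩
  have hrep : ∀ π : T, ∃ p : (Fin l → Fin n) × (Fin k → Fin n),
      Setoid.ker (Fin.append p.1 p.2) = (π : Setoid (Fin (l + k))) := by
    intro π
    obtain ⟨g, hg⟩ := exists_tuple_of_card_le π.1 π.2
    refine ⟨(fun i => g (Fin.castAdd k i), fun i => g (Fin.natAdd l i)), ?_⟩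
    rw [Fin.append_castAdd_natAdd]
    exact hg
  choose rep hrepk using hrep
  have hXrep : ∀ π π' : T, X π (rep π') = if π' = π then 1 else 0 := by
    intro π π'
    show (if Setoid.ker (Fin.append (rep π').1 (rep π').2) = (π : Setoid (Fin (l + k)))
      then (1:ℂ) else 0) = _
    rw [hrepk π']
    by_cases hcase : π' = π
    · simp [hcase]
    · rw [if_neg (fun hh => hcase (Subtype.ext hh)), if_neg hcase]
  -- linear independence
  have hli : LinearIndependent ℂ v := by
    rw [Fintype.linearIndependent_iff]
    intro c hc π₀
    have h0 : (((∑ π : T, c π • v π : MHom n l k) :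
        (Fin l → Fin n) × (Fin k → Fin n) → ℂ)) (rep π₀) = 0 := by
      rw [hc]; rfl
    rw [AddSubmonoidClass.coe_finset_sum] at h0
    simp only [Finset.sum_apply, SetLike.val_smul, Pi.smul_apply, smul_eq_mul] at h0
    simp only [v, hXrep, mul_ite, mul_one, mul_zero, Finset.sum_ite_eq, Finset.mem_univ,
      if_true] at h0
    rwa [Finset.sum_eq_single_of_mem π₀ (Finset.mem_univ _) (fun b _ hb => if_neg (Ne.symm hb)), if_pos rfl] at h0
  -- spanning
  have hspan : ⊤ ≤ Submodule.span ℂ (Set.range v) := by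
    rintro ⟨f, hf⟩ -
    have hdecomp : (⟨f, hf⟩ : MHom n l k) = ∑ π : T, f (rep π) • v π := by
      apply Subtype.ext
      rw [AddSubmonoidClass.coe_finset_sum]
      funext p
      simp only [Finset.sum_apply, SetLike.val_smul, Pi.smul_apply, smul_eq_mul]
      set π₀ : T := ⟨Setoid.ker (Fin.append p.1 p.2), card_quot_ker_le _⟩ with hπ₀
      have hX : ∀ π : T, X π p = if π₀ = π then 1 else 0 := by
        intro π
        show (if Setoid.ker (Fin.append p.1 p.2) = (π : Setoid (Fin (l + k))) then (1:ℂ) else 0) = _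
        by_cases hcase : π₀ = π
        · rw [if_pos (hcase ▸ (rfl : Setoid.ker (Fin.append p.1 p.2) = (π₀ : Setoid (Fin (l + k))))),
            if_pos hcase]
        · rw [if_neg (fun hh => hcase (Subtype.ext hh)), if_neg hcase]
      have hfp : f (rep π₀) = f p := by
        obtain ⟨σ, hσ⟩ := exists_perm_of_ker_eq (Fin.append (rep π₀).1 (rep π₀).2)
          (Fin.append p.1 p.2) (hrepk π₀)
        have h1 : ⇑σ ∘ (rep π₀).1 = p.1 := funext fun i => by
          simpa [Fin.append_left] using congrFun hσ (Fin.castAdd k i)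
        have h2 : ⇑σ ∘ (rep π₀).2 = p.2 := funext fun i => by
          simpa [Fin.append_right] using congrFun hσ (Fin.natAdd l i)
        have hff := hf σ (rep π₀).1 (rep π₀).2
        rw [h1, h2] at hff
        exact hff.symm
      simp only [v, hX, mul_ite, mul_one, mul_zero, Finset.sum_ite_eq, Finset.mem_univ, if_true]
      rw [Finset.sum_eq_single_of_mem π₀ (Finset.mem_univ _) (fun b _ hb => if_neg (Ne.symm hb)), if_pos rfl]
      exact hfp.symm
    rw [hdecomp]
    exact Submodule.sum_mem _ fun π _ => Submodule.smul_mem _ _ (Submodule.subset_span ⟨π, rfl⟩)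
  let b := Module.Basis.mk hli hspan
  refine ⟨⟨b, ?_⟩, ?_⟩
  · intro π I J
    have hb : b π = v π := Module.Basis.mk_apply hli hspan π
    rw [hb]
  · rw [Module.finrank_eq_card_basis b]
    exact Nat.card_eq_fintype_card.symm

end
end

section
/- Let l, k ≥ 0 and n, d_k, d_l ≥ 1. The complex vector space of matrices f : ((Fin l → Fin n) × Fin d_l) × ((Fin k → Fin n) × Fin d_k) → ℂ satisfying f((σ ∘ I, i), (σ ∘ J, j)) = f((I, i), (J, j)) for all σ ∈ S_n has dimension d_k · d_l · Bell(l+k, n); a basis is given by the matrices X_{π,i,j} indexed by set partitions π of Fin(l+k) with at most n blocks and by i ∈ Fin d_l, j ∈ Fin d_k, where X_{π,i,j}((I, i'), (J, j')) = 1 if i' = i, j' = j and the kernel partition of the concatenated tuple (I, J) equals π, and 0 otherwise. -/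
noncomputable section
open scoped Classical

instance setoidFinite {α : Type*} [Finite α] : Finite (Setoid α) :=
  Finite.of_injective (fun s => s.r) fun a b h => Setoid.ext fun x y => by
    exact iff_of_eq (congrFun (congrFun h x) y)

lemma comp_fin_append {α β : Type*} {l k : ℕ} (g : α → β) (I : Fin l → α) (J : Fin k → α) :
    g ∘ Fin.append I J = Fin.append (g ∘ I) (g ∘ J) := by
  funext x
  induction x using Fin.addCases with
  | left a => simp [Fin.append_left]
  | right b => simp [Fin.append_right]

lemma ker_comp_inj {α β γ : Type*} (T : α → β) {g : β → γ} (hg : Function.Injective g) :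
    Setoid.ker (g ∘ T) = Setoid.ker T :=
  Setoid.ext fun x y => by simp [Setoid.ker_def, hg.eq_iff]

lemma ker_card_le {m n : ℕ} (T : Fin m → Fin n) :
    Nat.card (Quotient (Setoid.ker T)) ≤ n := by
  rw [Nat.card_congr (Setoid.quotientKerEquivRange T)]
  have : Nat.card (Set.range T) ≤ Nat.card (Fin n) :=
    Nat.card_le_card_of_injective _ Subtype.val_injective
  simpa using this

lemma exists_tuple_ker {m n : ℕ} (π : Setoid (Fin m)) (h : Nat.card (Quotient π) ≤ n) :
    ∃ T : Fin m → Fin n, Setoid.ker T = π := by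
  have : Finite (Quotient π) := Quotient.finite _
  have : Fintype (Quotient π) := Fintype.ofFinite _
  obtain ⟨g⟩ : Nonempty (Quotient π ↪ Fin n) :=
    Function.Embedding.nonempty_of_card_le (by simpa [Nat.card_eq_fintype_card] using h)
  refine ⟨g ∘ Quotient.mk π, Setoid.ext fun x y => ?_⟩
  simp [Setoid.ker_def, g.injective.eq_iff, Quotient.eq]

lemma exists_perm_comp_eq {m n : ℕ} (T T' : Fin m → Fin n)
    (h : Setoid.ker T = Setoid.ker T') :
    ∃ σ : Equiv.Perm (Fin n), ⇑σ ∘ T = T' := by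
  have key : ∀ x y, T x = T y ↔ T' x = T' y := fun x y => by
    rw [← Setoid.ker_def (f := T), ← Setoid.ker_def (f := T'), h]
  let f : {y // y ∈ Set.range T} → {y // y ∈ Set.range T'} :=
    fun y => ⟨T' (Classical.choose y.2), Set.mem_range_self _⟩
  have hf : ∀ (x : Fin m) (hx : T x ∈ Set.range T), f ⟨T x, hx⟩ = ⟨T' x, Set.mem_range_self _⟩ := by
    intro x hx
    have := Classical.choose_spec hx
    exact Subtype.ext ((key _ _).mp this)
  have hbij : Function.Bijective f := by
    constructor
    · rintro ⟨y1, x1, rfl⟩ ⟨y2, x2, rfl⟩ hfeq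
      rw [hf x1 (Set.mem_range_self _), hf x2 (Set.mem_range_self _)] at hfeq
      exact Subtype.ext ((key _ _).mpr (congrArg Subtype.val hfeq))
    · rintro ⟨y', x, rfl⟩
      exact ⟨⟨T x, Set.mem_range_self _⟩, hf x _⟩
  let e := Equiv.ofBijective f hbij
  refine ⟨e.extendSubtype, funext fun x => ?_⟩
  rw [Function.comp_apply, e.extendSubtype_apply_of_mem (T x) (Set.mem_range_self x)]
  exact congrArg Subtype.val (hf x _)


/-- The space `Hom_{S_n}(M_n^{⊗k} ⊗ ℂ^{d_k}, M_n^{⊗l} ⊗ ℂ^{d_l})` in the standard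
basis: matrices `f : ((Fin l → Fin n) × Fin dl) × ((Fin k → Fin n) × Fin dk) → ℂ`
satisfying `f ((σ ∘ I, i), (σ ∘ J, j)) = f ((I, i), (J, j))` for all `σ ∈ S_n`. -/
def MHomFeat (n l k dl dk : ℕ) :
    Submodule ℂ (((Fin l → Fin n) × Fin dl) × ((Fin k → Fin n) × Fin dk) → ℂ) where
  carrier := {f | ∀ (σ : Equiv.Perm (Fin n)) (I : Fin l → Fin n) (i : Fin dl)
    (J : Fin k → Fin n) (j : Fin dk),
    f ((⇑σ ∘ I, i), (⇑σ ∘ J, j)) = f ((I, i), (J, j))}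
  add_mem' := by
    intro a b ha hb σ I i J j
    simp only [Pi.add_apply, ha σ I i J j, hb σ I i J j]
  zero_mem' := by intro σ I i J j; rfl
  smul_mem' := by
    intro c a ha σ I i J j
    simp only [Pi.smul_apply, ha σ I i J j]

/-- the space above has dimension `dk * dl * Bell (l + k) n`, with basis
the matrices `X_{π,i,j}` indexed by set partitions `π` of `Fin (l + k)` with at most
`n` blocks and feature indices `i ∈ Fin dl`, `j ∈ Fin dk`, where
`X_{π,i,j} ((I, i'), (J, j')) = 1` if `i' = i`, `j' = j` and the kernel partition of
the concatenated tuple `(I, J)` equals `π`, and `0` otherwise. -/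
theorem MHomFeat_basis (l k n dl dk : ℕ) (hn : 1 ≤ n) (hdl : 1 ≤ dl) (hdk : 1 ≤ dk) :
    Module.finrank ℂ ↥(MHomFeat n l k dl dk) = dk * dl * Bell (l + k) n ∧
    ∃ b : Module.Basis ({π : Setoid (Fin (l + k)) // Nat.card (Quotient π) ≤ n} × Fin dl × Fin dk)
        ℂ ↥(MHomFeat n l k dl dk),
      ∀ (x : {π : Setoid (Fin (l + k)) // Nat.card (Quotient π) ≤ n} × Fin dl × Fin dk)
        (I : Fin l → Fin n) (i' : Fin dl) (J : Fin k → Fin n) (j' : Fin dk),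
        (b x : ((Fin l → Fin n) × Fin dl) × ((Fin k → Fin n) × Fin dk) → ℂ)
            ((I, i'), (J, j')) =
          if i' = x.2.1 ∧ j' = x.2.2 ∧ Setoid.ker (Fin.append I J) = (x.1 : Setoid (Fin (l + k)))
          then 1 else 0 := by
    classical
  set S := {π : Setoid (Fin (l + k)) // Nat.card (Quotient π) ≤ n} with hS
  -- choose representatives
  have rep0 : ∀ π : S, ∃ T : Fin (l + k) → Fin n, Setoid.ker T = π.1 :=
    fun π => exists_tuple_ker π.1 π.2
  let rep : S → (Fin l → Fin n) × (Fin k → Fin n) := fun π =>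
    (fun a => Classical.choose (rep0 π) (Fin.castAdd k a),
     fun b => Classical.choose (rep0 π) (Fin.natAdd l b))
  have hrep : ∀ π : S, Setoid.ker (Fin.append (rep π).1 (rep π).2) = π.1 := by
    intro π
    have h := Classical.choose_spec (rep0 π)
    rw [← h]
    congr 1
    exact Fin.append_castAdd_natAdd
  -- the inverse map
  let Ψ : (S × Fin dl × Fin dk → ℂ) →
      (((Fin l → Fin n) × Fin dl) × ((Fin k → Fin n) × Fin dk) → ℂ) :=
    fun g p => g (⟨Setoid.ker (Fin.append p.1.1 p.2.1), ker_card_le _⟩, p.1.2, p.2.2)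
  have hΨmem : ∀ g, Ψ g ∈ MHomFeat n l k dl dk := by
    intro g σ I i J j
    have h1 : (⟨Setoid.ker (Fin.append (⇑σ ∘ I) (⇑σ ∘ J)), ker_card_le _⟩ : S)
        = ⟨Setoid.ker (Fin.append I J), ker_card_le _⟩ :=
      Subtype.ext (show Setoid.ker (Fin.append (⇑σ ∘ I) (⇑σ ∘ J)) = Setoid.ker (Fin.append I J) by
        rw [← comp_fin_append]; exact ker_comp_inj _ σ.injective)
    show g (⟨Setoid.ker (Fin.append (⇑σ ∘ I) (⇑σ ∘ J)), ker_card_le _⟩, i, j)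
        = g (⟨Setoid.ker (Fin.append I J), ker_card_le _⟩, i, j)
    rw [h1]
  -- the linear equivalence
  let E : ↥(MHomFeat n l k dl dk) ≃ₗ[ℂ] (S × Fin dl × Fin dk → ℂ) :=
    { toFun := fun f x => f.1 (((rep x.1).1, x.2.1), ((rep x.1).2, x.2.2))
      map_add' := fun f g => rfl
      map_smul' := fun c f => rfl
      invFun := fun g => ⟨Ψ g, hΨmem g⟩
      left_inv := by
        rintro ⟨f, hf⟩
        refine Subtype.ext (funext fun p => ?_)
        obtain ⟨⟨I, i⟩, J, j⟩ := p
        set π : S := ⟨Setoid.ker (Fin.append I J), ker_card_le _⟩ with hπ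
        obtain ⟨σ, hσ⟩ := exists_perm_comp_eq (Fin.append (rep π).1 (rep π).2)
          (Fin.append I J) (by rw [hrep π])
        rw [comp_fin_append] at hσ
        have h1 : ⇑σ ∘ (rep π).1 = I := funext fun a => by
          simpa [Fin.append_left] using congrFun hσ (Fin.castAdd k a)
        have h2 : ⇑σ ∘ (rep π).2 = J := funext fun b => by
          simpa [Fin.append_right] using congrFun hσ (Fin.natAdd l b)
        show f (((rep π).1, i), ((rep π).2, j)) = f ((I, i), (J, j))
        rw [← hf σ (rep π).1 i (rep π).2 j, h1, h2]
      right_inv := by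
        intro g
        funext x
        show g (⟨Setoid.ker (Fin.append (rep x.1).1 (rep x.1).2), ker_card_le _⟩, x.2.1, x.2.2)
            = g x
        congr 1
        exact Prod.ext (Subtype.ext (hrep x.1)) rfl }
  have : Finite S := Subtype.finite
  have : Fintype S := Fintype.ofFinite _
  constructor
  · rw [E.finrank_eq, Module.finrank_pi, Fintype.card_prod, Fintype.card_prod,
      Fintype.card_fin, Fintype.card_fin, Bell, Nat.card_eq_fintype_card]
    ring
  · refine ⟨(Pi.basisFun ℂ (S × Fin dl × Fin dk)).map E.symm, ?_⟩
    intro x I i' J j'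
    have hb : (((Pi.basisFun ℂ (S × Fin dl × Fin dk)).map E.symm x :
        ↥(MHomFeat n l k dl dk)) : _ → ℂ) = Ψ (Pi.single x 1) := by
      rw [Module.Basis.map_apply, Pi.basisFun_apply]
      rfl
    rw [hb]
    show Pi.single (M := fun _ : S × Fin dl × Fin dk => ℂ) x 1 (⟨Setoid.ker (Fin.append I J), ker_card_le _⟩, i', j')
        = if i' = x.2.1 ∧ j' = x.2.2 ∧ Setoid.ker (Fin.append I J) = (x.1 : Setoid (Fin (l + k)))
          then 1 else 0
    rw [Pi.single_apply]
    refine if_congr ?_ rfl rfl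
    obtain ⟨⟨π, hπ⟩, xi, xj⟩ := x
    simp only [Prod.mk.injEq]
    constructor
    · rintro ⟨h1, h2, h3⟩
      exact ⟨h2, h3, congrArg Subtype.val h1⟩
    · rintro ⟨h2, h3, h1⟩
      exact ⟨Subtype.ext h1, h2, h3⟩


end
end
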